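/- Let k ≥ 2 be an integer and let G be a finite simple graph containing no subgraph isomorphic to the complete graph K_{k+1}. Then cw(G) ≥ (k/(k−1)) · δ(G)²/4 − (k−1)/k, where cw(G) is the cutwidth and δ(G) the degeneracy of G. -/

import Mathlib

open Finset

variable {V : Type*}

/-- The number of edges crossing position `i` in the linear ordering `f`. -/
def SimpleGraph.cutAt [Fintype V] [DecidableEq V] (G : SimpleGraph V) [DecidableRel G.Adj]
    (f : V ≃ Fin (Fintype.card V)) (i : Fin (Fintype.card V)) : ℕ :=
  (G.edgeFinset.filter (fun e => ∃ u ∈ e, ∃ v ∈ e, f u ≤ i ∧ i < f v)).card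

/-- The cutwidth of a finite simple graph. -/
noncomputable def SimpleGraph.cutwidth [Fintype V] [DecidableEq V] (G : SimpleGraph V)
    [DecidableRel G.Adj] : ℕ :=
  sInf { m | ∃ f : V ≃ Fin (Fintype.card V), m = Finset.univ.sup (fun i => G.cutAt f i) }

/-- The degeneracy of a finite simple graph. -/
noncomputable def SimpleGraph.degeneracy [Fintype V] [DecidableEq V] (G : SimpleGraph V)
    [DecidableRel G.Adj] : ℕ :=
  sSup { k | ∃ s : Finset V, s.Nonempty ∧ ∀ v ∈ s, k ≤ (s.filter (G.Adj v)).card }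

/-- Number of edges of the induced subgraph on `s`. -/
def SimpleGraph.inducedEdgeCount [Fintype V] [DecidableEq V] (G : SimpleGraph V)
    [DecidableRel G.Adj] (s : Finset V) : ℕ :=
  (G.edgeFinset.filter (fun e => ∀ u ∈ e, u ∈ s)).card

/-- `(ρ, λ)`-uniform sparsity. -/
def SimpleGraph.UniformlySparse [Fintype V] [DecidableEq V] (G : SimpleGraph V)
    [DecidableRel G.Adj] (ρ lam : ℝ) : Prop :=
  ∀ s : Finset V, ρ * (Fintype.card V : ℝ) ≤ (s.card : ℝ) →
    (G.inducedEdgeCount s : ℝ) ≤ (s.card : ℝ) * ((s.card : ℝ) - 1) / (2 * lam)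

/- ### Auxiliary lemmas -/

private lemma double_count [DecidableEq V] (G : SimpleGraph V) [DecidableRel G.Adj]
    (a b : Finset V) :
    ∑ v ∈ a, (b.filter (G.Adj v)).card = ∑ v ∈ b, (a.filter (G.Adj v)).card := by
  simp only [Finset.card_filter]
  rw [Finset.sum_comm]
  exact Finset.sum_congr rfl fun v _ => Finset.sum_congr rfl fun w _ => by simp only [G.adj_comm w v]

/-- Weak Turán bound, local version: if a finset `s` contains no `(r+2)`-clique, then
`(r+1) · ∑_{v∈s} deg_s(v) ≤ r · |s|²`. -/
private lemma turan_aux [DecidableEq V] (G : SimpleGraph V) [DecidableRel G.Adj] :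
    ∀ r : ℕ, ∀ s : Finset V, (∀ u : Finset V, u ⊆ s → ¬ G.IsNClique (r + 2) u) →
      (r + 1) * (∑ v ∈ s, (s.filter (G.Adj v)).card) ≤ r * s.card ^ 2 := by
  intro r
  induction r with
  | zero =>
    intro s h
    simp only [zero_add, one_mul, Nat.zero_mul, Nat.le_zero]
    refine Finset.sum_eq_zero fun v hv => ?_
    rw [Finset.card_eq_zero, Finset.filter_eq_empty_iff]
    intro w hw hadj
    refine h {v, w} ?_ ⟨by
      simp only [Finset.coe_insert, Finset.coe_singleton, SimpleGraph.isClique_pair]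
      exact fun _ => hadj, Finset.card_pair hadj.ne⟩
    intro x hx
    rcases Finset.mem_insert.1 hx with rfl | hx
    · exact hv
    · rwa [Finset.mem_singleton.1 hx]
  | succ r ih_r =>
    intro s
    induction s using Finset.strongInduction with
    | _ s ih =>
      intro h
      by_cases hex : ∃ u : Finset V, u ⊆ s ∧ G.IsNClique (r + 2) u
      · obtain ⟨u, hus, hu⟩ := hex
        have hucard : u.card = r + 2 := hu.2
        have hune : u.Nonempty := Finset.card_pos.1 (by omega)
        have hss : s \ u ⊂ s := Finset.sdiff_ssubset hus hune
        have hdegu : ∀ v ∈ s, (u.filter (G.Adj v)).card ≤ r + 1 := by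
          intro v hv
          by_contra hc
          push_neg at hc
          have hfe : u.filter (G.Adj v) = u :=
            Finset.eq_of_subset_of_card_le (Finset.filter_subset _ _)
              (by omega)
          have hall : ∀ w ∈ u, G.Adj v w := by
            intro w hw
            have : w ∈ u.filter (G.Adj v) := by rw [hfe]; exact hw
            exact (Finset.mem_filter.1 this).2
          have hvnu : v ∉ u := fun hvu => G.irrefl (hall v hvu)
          exact h (insert v u) (Finset.insert_subset hv hus)
            (hu.insert fun w hw => hall w hw)
        -- split degree sums
        have hsplit : ∀ v : V,
            (s.filter (G.Adj v)).card
              = ((s \ u).filter (G.Adj v)).card + (u.filter (G.Adj v)).card := by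
          intro v
          rw [← Finset.card_union_of_disjoint
              (Finset.disjoint_filter_filter Finset.sdiff_disjoint),
            ← Finset.filter_union, Finset.sdiff_union_of_subset hus]
        have hsum : ∑ v ∈ s, (s.filter (G.Adj v)).card
            = ∑ v ∈ s \ u, (s.filter (G.Adj v)).card
              + ∑ v ∈ u, (s.filter (G.Adj v)).card :=
          (Finset.sum_sdiff hus).symm
        set m := (s \ u).card with hm
        have hmcard : s.card = m + (r + 2) := by
          rw [hm, Finset.card_sdiff_of_subset hus, hucard]
          have := Finset.card_le_card hus
          omega
        -- pieces
        have hE' := ih (s \ u) hss (fun w hw hcl => h w (hw.trans (Finset.sdiff_subset)) hcl)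
        have hX : ∑ v ∈ s \ u, (u.filter (G.Adj v)).card ≤ m * (r + 1) := by
          calc ∑ v ∈ s \ u, (u.filter (G.Adj v)).card
              ≤ ∑ _v ∈ s \ u, (r + 1) :=
                Finset.sum_le_sum fun v hv => hdegu v (Finset.mem_sdiff.1 hv).1
            _ = m * (r + 1) := by rw [Finset.sum_const, smul_eq_mul, hm]
        have hY : ∑ v ∈ u, ((s \ u).filter (G.Adj v)).card ≤ m * (r + 1) := by
          rw [double_count]
          exact hX
        have hZ : ∑ v ∈ u, (u.filter (G.Adj v)).card ≤ (r + 2) * (r + 1) := by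
          calc ∑ v ∈ u, (u.filter (G.Adj v)).card
              ≤ ∑ _v ∈ u, (r + 1) :=
                Finset.sum_le_sum fun v hv => hdegu v (hus hv)
            _ = (r + 2) * (r + 1) := by rw [Finset.sum_const, smul_eq_mul, hucard]
        have htotal : ∑ v ∈ s, (s.filter (G.Adj v)).card
            ≤ (∑ v ∈ s \ u, ((s \ u).filter (G.Adj v)).card)
              + (2 * (m * (r + 1)) + (r + 2) * (r + 1)) := by
          rw [hsum]
          have h1 : ∑ v ∈ s \ u, (s.filter (G.Adj v)).card
              = ∑ v ∈ s \ u, ((s \ u).filter (G.Adj v)).card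
                + ∑ v ∈ s \ u, (u.filter (G.Adj v)).card := by
            rw [← Finset.sum_add_distrib]
            exact Finset.sum_congr rfl fun v _ => hsplit v
          have h2 : ∑ v ∈ u, (s.filter (G.Adj v)).card
              = ∑ v ∈ u, ((s \ u).filter (G.Adj v)).card
                + ∑ v ∈ u, (u.filter (G.Adj v)).card := by
            rw [← Finset.sum_add_distrib]
            exact Finset.sum_congr rfl fun v _ => hsplit v
          rw [h1, h2]
          linarith [hX, hY, hZ]
        have hfin : (r + 2) * (∑ v ∈ s, (s.filter (G.Adj v)).card)
            ≤ (r + 1) * m ^ 2 + (r + 2) * (2 * (m * (r + 1)) + (r + 2) * (r + 1)) := by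
          calc (r + 2) * (∑ v ∈ s, (s.filter (G.Adj v)).card)
              ≤ (r + 2) * ((∑ v ∈ s \ u, ((s \ u).filter (G.Adj v)).card)
                + (2 * (m * (r + 1)) + (r + 2) * (r + 1))) :=
                Nat.mul_le_mul_left _ htotal
            _ = (r + 2) * (∑ v ∈ s \ u, ((s \ u).filter (G.Adj v)).card)
                + (r + 2) * (2 * (m * (r + 1)) + (r + 2) * (r + 1)) := by ring
            _ ≤ (r + 1) * m ^ 2 + (r + 2) * (2 * (m * (r + 1)) + (r + 2) * (r + 1)) := by
                have : (r + 1 + 1) * (∑ v ∈ s \ u, ((s \ u).filter (G.Adj v)).card)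
                    ≤ (r + 1) * m ^ 2 := hE'
                linarith
        calc (r + 1 + 1) * (∑ v ∈ s, (s.filter (G.Adj v)).card)
            ≤ (r + 1) * m ^ 2 + (r + 2) * (2 * (m * (r + 1)) + (r + 2) * (r + 1)) := hfin
          _ = (r + 1) * (m + (r + 2)) ^ 2 := by ring
          _ = (r + 1) * s.card ^ 2 := by rw [hmcard]
      · push_neg at hex
        have hbase := ih_r s hex
        have hdeg : ∑ v ∈ s, (s.filter (G.Adj v)).card ≤ s.card ^ 2 := by
          calc ∑ v ∈ s, (s.filter (G.Adj v)).card
              ≤ ∑ _v ∈ s, s.card :=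
                Finset.sum_le_sum fun v _ => Finset.card_le_card (Finset.filter_subset _ _)
            _ = s.card ^ 2 := by rw [Finset.sum_const, smul_eq_mul, sq]
        calc (r + 1 + 1) * (∑ v ∈ s, (s.filter (G.Adj v)).card)
            = (r + 1) * (∑ v ∈ s, (s.filter (G.Adj v)).card)
              + (∑ v ∈ s, (s.filter (G.Adj v)).card) := by ring
          _ ≤ r * s.card ^ 2 + s.card ^ 2 := Nat.add_le_add hbase hdeg
          _ = (r + 1) * s.card ^ 2 := by ring

/-- One can pick the `t` smallest (under `f`) elements of `s`. -/
private lemma exists_initial {β : Type*} [LinearOrder β] [DecidableEq V]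
    (f : V → β) (hf : Function.Injective f) (s : Finset V) :
    ∀ t : ℕ, t ≤ s.card →
      ∃ T : Finset V, T ⊆ s ∧ T.card = t ∧ ∀ u ∈ T, ∀ v ∈ s \ T, f u < f v := by
  intro t
  induction t with
  | zero => exact fun _ => ⟨∅, Finset.empty_subset _, rfl, by simp⟩
  | succ t ih =>
    intro ht
    obtain ⟨T, hTs, hTc, hsep⟩ := ih (by omega)
    have hne : (s \ T).Nonempty := by
      rw [← Finset.card_pos, Finset.card_sdiff_of_subset hTs]
      omega
    obtain ⟨m, hm, hmin⟩ := Finset.exists_min_image (s \ T) f hne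
    refine ⟨insert m T, Finset.insert_subset (Finset.mem_sdiff.1 hm).1 hTs, ?_, ?_⟩
    · rw [Finset.card_insert_of_notMem (Finset.mem_sdiff.1 hm).2, hTc]
    · intro u hu v hv
      have hv' : v ∈ s \ T := by
        rw [Finset.mem_sdiff] at hv ⊢
        exact ⟨hv.1, fun h => hv.2 (Finset.mem_insert_of_mem h)⟩
      rcases Finset.mem_insert.1 hu with rfl | hu
      · refine lt_of_le_of_ne (hmin v hv') fun heq => ?_
        exact (Finset.mem_sdiff.1 hv).2 (hf heq ▸ Finset.mem_insert_self u T)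
      · exact hsep u hu v hv'

set_option maxHeartbeats 1000000 in
/-- **Corollary.** For every finite simple graph `G` with no subgraph isomorphic to `K_{k+1}`
(`k ≥ 2`), `cw(G) ≥ (k/(k−1)) δ(G)²/4 − (k−1)/k`. -/
theorem cutwidth_ge_of_cliqueFree [Fintype V] [DecidableEq V]
    (G : SimpleGraph V) [DecidableRel G.Adj] (k : ℕ) (hk : 2 ≤ k)
    (hcf : G.CliqueFree (k + 1)) :
    (G.cutwidth : ℝ) ≥ (k : ℝ) / ((k : ℝ) - 1) * (G.degeneracy : ℝ) ^ 2 / 4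
      - ((k : ℝ) - 1) / (k : ℝ) := by
  have hkR : (2 : ℝ) ≤ (k : ℝ) := by exact_mod_cast hk
  have hK0 : (0 : ℝ) < (k : ℝ) := by linarith
  have hK1 : (0 : ℝ) < (k : ℝ) - 1 := by linarith
  set d : ℕ := G.degeneracy with hd
  rcases Nat.eq_zero_or_pos d with hd0 | hd1
  · rw [hd0]
    have h1 : (0 : ℝ) ≤ ((k : ℝ) - 1) / (k : ℝ) := div_nonneg (by linarith) (by linarith)
    have h2 : (0 : ℝ) ≤ (G.cutwidth : ℝ) := Nat.cast_nonneg _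
    push_cast
    nlinarith
  -- extract a subgraph of minimum degree ≥ d
  have hDmem : d ∈ {k | ∃ s : Finset V, s.Nonempty ∧ ∀ v ∈ s, k ≤ (s.filter (G.Adj v)).card} := by
    rw [hd, SimpleGraph.degeneracy]
    refine Nat.sSup_mem ?_ ?_
    · by_contra hne
      rw [Set.not_nonempty_iff_eq_empty] at hne
      have : G.degeneracy = 0 := by rw [SimpleGraph.degeneracy, hne]; exact csSup_empty
      omega
    · refine ⟨Fintype.card V, fun n hn => ?_⟩
      obtain ⟨s, hs, hdeg⟩ := hn
      obtain ⟨v, hv⟩ := hs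
      calc n ≤ (s.filter (G.Adj v)).card := hdeg v hv
        _ ≤ s.card := Finset.card_le_card (Finset.filter_subset _ _)
        _ ≤ Fintype.card V :=
          (Finset.card_le_card (Finset.subset_univ s)).trans_eq Finset.card_univ
  obtain ⟨s, hsne, hsdeg⟩ := hDmem
  have hcard_s : d + 1 ≤ s.card := by
    obtain ⟨v, hv⟩ := hsne
    have h1 := hsdeg v hv
    have h2 : s.filter (G.Adj v) ⊆ s.erase v := by
      intro w hw
      rw [Finset.mem_filter] at hw
      exact Finset.mem_erase.2 ⟨fun hwv => G.irrefl (hwv ▸ hw.2), hw.1⟩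
    have h3 := (Finset.card_le_card h2).trans (le_of_eq (Finset.card_erase_of_mem hv))
    have h4 : 1 ≤ s.card := Finset.card_pos.2 ⟨v, hv⟩
    omega
  -- pick an optimal ordering
  have hcwmem : G.cutwidth ∈
      {m | ∃ f : V ≃ Fin (Fintype.card V), m = Finset.univ.sup (fun i => G.cutAt f i)} :=
    Nat.sInf_mem ⟨_, (Fintype.equivFin V), rfl⟩
  obtain ⟨f, hf⟩ := hcwmem
  -- the cut point
  set tstar : ℝ := (d : ℝ) * (k : ℝ) / (2 * ((k : ℝ) - 1)) with htstar
  have htstar_pos : 0 < tstar := by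
    apply div_pos
    · have : (1 : ℝ) ≤ (d : ℝ) := by exact_mod_cast hd1
      nlinarith
    · linarith
  set t : ℕ := ⌈tstar⌉₊ with htdef
  have ht1 : 1 ≤ t := Nat.one_le_ceil_iff.2 htstar_pos
  have htled : t ≤ d + 1 := by
    have : tstar ≤ (d : ℝ) := by
      rw [htstar, div_le_iff₀ (by linarith)]
      have hd0 : (0 : ℝ) ≤ (d : ℝ) := Nat.cast_nonneg _
      nlinarith
    calc t ≤ d := Nat.ceil_le.2 this
      _ ≤ d + 1 := Nat.le_succ _
  have htcard : t ≤ s.card := le_trans htled hcard_s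
  have ht_lb : tstar ≤ (t : ℝ) := Nat.le_ceil _
  have ht_ub : (t : ℝ) < tstar + 1 := Nat.ceil_lt_add_one htstar_pos.le
  obtain ⟨T, hTs, hTcard, hTsep⟩ := exists_initial (fun v => f v) f.injective s t htcard
  have hTne : T.Nonempty := Finset.card_pos.1 (by omega)
  obtain ⟨w, hwT, hwmax⟩ := Finset.exists_max_image T (fun v => f v) hTne
  set i : Fin (Fintype.card V) := f w with hi
  -- adjacent pairs crossing the cut
  set P : Finset (V × V) := (T ×ˢ (s \ T)).filter (fun p => G.Adj p.1 p.2) with hP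
  have hPcut : P.card ≤ G.cutAt f i := by
    unfold SimpleGraph.cutAt
    apply Finset.card_le_card_of_injOn (fun p : V × V => Sym2.mk p.1 p.2)
    · intro p hp
      rw [Finset.mem_coe] at hp ⊢
      rw [hP, Finset.mem_filter, Finset.mem_product] at hp
      obtain ⟨⟨hp1, hp2⟩, hadj⟩ := hp
      rw [Finset.mem_filter]
      refine ⟨SimpleGraph.mem_edgeFinset.2 hadj, p.1, ?_, p.2, ?_, hwmax p.1 hp1,
        hTsep w hwT p.2 hp2⟩
      · exact Sym2.mem_mk_left _ _
      · exact Sym2.mem_mk_right _ _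
    · intro p hp q hq heq
      rw [Finset.mem_coe, hP, Finset.mem_filter, Finset.mem_product] at hp hq
      rcases Sym2.eq_iff.1 heq with ⟨h1, h2⟩ | ⟨h1, h2⟩
      · exact Prod.ext h1 h2
      · exfalso
        exact (Finset.mem_sdiff.1 hq.1.2).2 (h1 ▸ hp.1.1)
  -- counting P
  have hPcount : P.card = ∑ u ∈ T, ((s \ T).filter (G.Adj u)).card := by
    rw [hP, Finset.card_filter, Finset.sum_product]
    exact Finset.sum_congr rfl fun u _ => (Finset.card_filter _ _).symm
  have hsplit : ∀ u : V,
      (s.filter (G.Adj u)).card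
        = ((s \ T).filter (G.Adj u)).card + (T.filter (G.Adj u)).card := by
    intro u
    rw [← Finset.card_union_of_disjoint (Finset.disjoint_filter_filter Finset.sdiff_disjoint),
      ← Finset.filter_union, Finset.sdiff_union_of_subset hTs]
  set A : ℕ := ∑ u ∈ T, (s.filter (G.Adj u)).card with hA
  set B : ℕ := ∑ u ∈ T, (T.filter (G.Adj u)).card with hB
  have hPAB : P.card + B = A := by
    rw [hPcount, hA, hB, ← Finset.sum_add_distrib]
    exact Finset.sum_congr rfl fun u _ => (hsplit u).symm
  have hAlb : t * d ≤ A := by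
    rw [hA]
    calc t * d = ∑ _u ∈ T, d := by rw [Finset.sum_const, smul_eq_mul, hTcard]
      _ ≤ ∑ u ∈ T, (s.filter (G.Adj u)).card :=
        Finset.sum_le_sum fun u hu => hsdeg u (hTs hu)
  have hBub : k * B ≤ (k - 1) * t ^ 2 := by
    have hk1 : k - 1 + 2 = k + 1 := by omega
    have hk2 : k - 1 + 1 = k := by omega
    have htur := turan_aux G (k - 1) T (fun u _ hcl => hcf u (hk1 ▸ hcl))
    rw [hk2, hTcard] at htur
    exact htur
  -- pass to the reals
  have hcast1 : ((k - 1 : ℕ) : ℝ) = (k : ℝ) - 1 := by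
    have : 1 ≤ k := by omega
    push_cast [this]
    ring
  have hBR : (B : ℝ) ≤ ((k : ℝ) - 1) * (t : ℝ) ^ 2 / (k : ℝ) := by
    rw [le_div_iff₀ hK0]
    have : ((k : ℕ) : ℝ) * (B : ℝ) ≤ (((k - 1) : ℕ) : ℝ) * ((t : ℕ) : ℝ) ^ 2 := by
      exact_mod_cast hBub
    rw [hcast1] at this
    linarith
  have hPR : (t : ℝ) * (d : ℝ) - ((k : ℝ) - 1) * (t : ℝ) ^ 2 / (k : ℝ) ≤ (P.card : ℝ) := by
    have h1 : (P.card : ℝ) + (B : ℝ) = (A : ℝ) := by exact_mod_cast hPAB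
    have h2 : (t : ℝ) * (d : ℝ) ≤ (A : ℝ) := by exact_mod_cast hAlb
    linarith
  have hcwR : (P.card : ℝ) ≤ (G.cutwidth : ℝ) := by
    have h1 : G.cutAt f i ≤ G.cutwidth := by
      rw [hf]
      exact Finset.le_sup (Finset.mem_univ i)
    exact_mod_cast hPcut.trans h1
  -- final algebra
  have hA' : (d : ℝ) * (k : ℝ) ≤ 2 * ((k : ℝ) - 1) * (t : ℝ) := by
    rw [htstar, div_le_iff₀ (by linarith)] at ht_lb
    linarith
  have hB' : 2 * ((k : ℝ) - 1) * (t : ℝ) ≤ (d : ℝ) * (k : ℝ) + 2 * ((k : ℝ) - 1) := by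
    rw [htstar] at ht_ub
    have : ((t : ℝ) - 1) * (2 * ((k : ℝ) - 1)) < (d : ℝ) * (k : ℝ) := by
      rw [← lt_div_iff₀ (by linarith)]
      linarith
    nlinarith
  have key : (k : ℝ) / ((k : ℝ) - 1) * (d : ℝ) ^ 2 / 4 - ((k : ℝ) - 1) / (k : ℝ)
      ≤ (t : ℝ) * (d : ℝ) - ((k : ℝ) - 1) * (t : ℝ) ^ 2 / (k : ℝ) := by
    have hpos : (0 : ℝ) < ((k : ℝ) - 1) * (k : ℝ) := by positivity
    have key2 : ((k : ℝ) / ((k : ℝ) - 1) * (d : ℝ) ^ 2 / 4 - ((k : ℝ) - 1) / (k : ℝ))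
        * (((k : ℝ) - 1) * (k : ℝ))
        ≤ ((t : ℝ) * (d : ℝ) - ((k : ℝ) - 1) * (t : ℝ) ^ 2 / (k : ℝ))
        * (((k : ℝ) - 1) * (k : ℝ)) := by
      have e1 : ((k : ℝ) / ((k : ℝ) - 1) * (d : ℝ) ^ 2 / 4 - ((k : ℝ) - 1) / (k : ℝ))
          * (((k : ℝ) - 1) * (k : ℝ))
          = (k : ℝ) ^ 2 * (d : ℝ) ^ 2 / 4 - ((k : ℝ) - 1) ^ 2 := by
        field_simp
      have e2 : ((t : ℝ) * (d : ℝ) - ((k : ℝ) - 1) * (t : ℝ) ^ 2 / (k : ℝ))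
          * (((k : ℝ) - 1) * (k : ℝ))
          = (t : ℝ) * (d : ℝ) * ((k : ℝ) - 1) * (k : ℝ)
            - ((k : ℝ) - 1) ^ 2 * (t : ℝ) ^ 2 := by
        field_simp
      rw [e1, e2]
      have h0X : (0 : ℝ) ≤ 2 * ((k : ℝ) - 1) * (t : ℝ) - (d : ℝ) * (k : ℝ) := by linarith
      have h2X : (0 : ℝ) ≤ (d : ℝ) * (k : ℝ) + 2 * ((k : ℝ) - 1)
          - 2 * ((k : ℝ) - 1) * (t : ℝ) := by linarith
      linarith [mul_nonneg h0X h2X, mul_nonneg hK1.le h2X]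
    exact le_of_mul_le_mul_right key2 hpos
  linarith
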